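/- Positivity of the self-regulated gradient (condition (cond4)): if a player v satisfies β v > 0 and β v > ρ · k v, then for every strategy profile x with x w ∈ (0,1] for all w, one has G v x − β v · f (x v) > 0. -/

import Mathlib

/-- Positivity of the self-regulated gradient (condition (cond4)): if player `v`
satisfies `β v > 0` and `β v > ρ * k v`, then for every profile `x` with
`x w ∈ (0,1]` for all `w`, `G v x - β v * f (x v) > 0`. -/
theorem self_regulated_gradient_positive
    (N : ℕ) (hN : 1 ≤ N)
    (A : Fin N → Fin N → ℝ)
    (hA01 : ∀ v w, A v w = 0 ∨ A v w = 1)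
    (hAdiag : ∀ v, A v v = 0)
    (σC σD : ℝ) (hσC : σC < 0) (hσD : 0 < σD)
    (β : Fin N → ℝ)
    (k : Fin N → ℝ) (hk : ∀ v, k v = ∑ w, A v w)
    (G : Fin N → (Fin N → ℝ) → ℝ)
    (hG : ∀ v x, G v x = ∑ w, A v w * ((σC + σD) * x w - σD))
    (f : ℝ → ℝ) (hf : ∀ y, f y = (σC + σD) * y - σD)
    (ψ ξ ρ : ℝ) (hψ : ψ = min σC (-σD)) (hξ : ξ = max σC (-σD)) (hρ : ρ = ψ / ξ)
    (v : Fin N) (hβpos : 0 < β v) (hβ : β v > ρ * k v)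
    (x : Fin N → ℝ) (hx : ∀ w, x w ∈ Set.Ioc (0 : ℝ) 1) :
    G v x - β v * f (x v) > 0 := by
  have hξneg : ξ < 0 := by rw [hξ]; exact max_lt hσC (by linarith)
  have hfb : ∀ y ∈ Set.Ioc (0:ℝ) 1, ψ ≤ f y ∧ f y ≤ ξ := by
    intro y hy
    obtain ⟨hy0, hy1⟩ := hy
    rw [hf, hψ, hξ]
    have h1 : min σC (-σD) ≤ σC := min_le_left _ _
    have h2 : min σC (-σD) ≤ -σD := min_le_right _ _
    have h3 : σC ≤ max σC (-σD) := le_max_left _ _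
    have h4 : -σD ≤ max σC (-σD) := le_max_right _ _
    constructor <;> nlinarith
  have hAnn : ∀ w, 0 ≤ A v w := fun w => by rcases hA01 v w with h | h <;> simp [h]
  have hGk : ψ * k v ≤ G v x := by
    rw [hG, hk, Finset.mul_sum]
    apply Finset.sum_le_sum
    intro w _
    have h1 := (hfb (x w) (hx w)).1
    have h2 := hAnn w
    rw [hf] at h1
    nlinarith
  have hfv : f (x v) ≤ ξ := (hfb (x v) (hx v)).2
  have hβξ : β v * ξ < ψ * k v := by
    rw [hρ] at hβ
    have h := mul_lt_mul_of_neg_right hβ hξneg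
    calc β v * ξ < ψ / ξ * k v * ξ := h
      _ = ψ * k v := by field_simp; ring_nf; field_simp [hξneg.ne]
  nlinarith [mul_le_mul_of_nonneg_left hfv (le_of_lt hβpos)]
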